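/- Let p be a prime and n ≥ 1. The polynomial φ_p^n(x) − 1, where φ_p^n denotes the n-fold composition of φ_p(x) = (x^p − x)/p with itself, has exactly p^n distinct roots in ℤ_p; in particular φ_p^n(x) − 1 splits completely into distinct linear factors over ℚ_p, so every algebraic number α with φ_p^n(α) = 1 is totally p-adic. -/

import Mathlib

open Polynomial



/-- The polynomial `φ_p(x) = (1/p)(x^p − x) ∈ ℚ[x]`. -/
noncomputable def phiPoly (p : ℕ) : Polynomial ℚ :=
  Polynomial.C (1 / (p : ℚ)) * (Polynomial.X ^ p - Polynomial.X)

/-- The `n`-fold composition (iterate) `φ_p^n` of `φ_p`, as a polynomial in `ℚ[x]`. -/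
noncomputable def phiPolyIter (p n : ℕ) : Polynomial ℚ :=
  (fun q => (phiPoly p).comp q)^[n] Polynomial.X

lemma phiPolyIter_succ (p n : ℕ) :
    phiPolyIter p (n + 1) = (phiPoly p).comp (phiPolyIter p n) := by
  simp only [phiPolyIter, Function.iterate_succ_apply']

lemma aeval_phiPolyIter (p n : ℕ) [Fact p.Prime] (x : ℚ_[p]) :
    Polynomial.aeval x (phiPolyIter p n) =
      (fun y : ℚ_[p] => (1 / (p : ℚ_[p])) * (y ^ p - y))^[n] x := by
  induction n with
  | zero => simp [phiPolyIter]
  | succ n ih =>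
    rw [phiPolyIter_succ, Polynomial.aeval_comp, ih, Function.iterate_succ_apply']
    simp [phiPoly, map_sub, map_pow, one_div]

lemma natDegree_phiPoly (p : ℕ) (hp : 2 ≤ p) : (phiPoly p).natDegree = p := by
  have h0 : (1 / (p:ℚ)) ≠ 0 := one_div_ne_zero (by exact_mod_cast (by omega : p ≠ 0))
  rw [phiPoly, natDegree_C_mul h0,
    Polynomial.natDegree_sub_eq_left_of_natDegree_lt, natDegree_X_pow]
  simp [Polynomial.natDegree_X_pow]; omega

lemma natDegree_phiPolyIter (p n : ℕ) (hp : 2 ≤ p) :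
    (phiPolyIter p n).natDegree = p ^ n := by
  induction n with
  | zero => simp [phiPolyIter]
  | succ n ih =>
    rw [phiPolyIter_succ, Polynomial.natDegree_comp, ih, natDegree_phiPoly p hp, pow_succ]
    ring



lemma fiber_root (p : ℕ) [hp : Fact p.Prime] (c : ℤ_[p]) (i : Fin p) :
    ∃ z : ℤ_[p], z ^ p - z = p * c ∧ ‖z - ((i : ℕ) : ℤ_[p])‖ < 1 := by
  have hp2 := hp.out.two_le
  set F : Polynomial ℤ_[p] := X ^ p - X - C ((p : ℤ_[p]) * c) with hF
  set a : ℤ_[p] := ((i : ℕ) : ℤ_[p]) with ha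
  have hFa : F.eval a = a ^ p - a - (p : ℤ_[p]) * c := by simp [hF]
  have hderiv : F.derivative.eval a = (p : ℤ_[p]) * a ^ (p - 1) - 1 := by
    simp [hF, Polynomial.derivative_X_pow]
  -- norm estimates
  have h1 : ‖a ^ p - a‖ < 1 := by
    have hcast : a ^ p - a = ((((i : ℕ) : ℤ) ^ p - ((i : ℕ) : ℤ) : ℤ) : ℤ_[p]) := by
      push_cast [ha]; ring
    rw [hcast, PadicInt.norm_int_lt_one_iff_dvd]
    rw [← ZMod.intCast_zmod_eq_zero_iff_dvd]
    push_cast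
    rw [ZMod.pow_card]
    ring
  have hc1 : ‖c‖ ≤ 1 := PadicInt.norm_le_one c
  have hpn : ‖(p : ℤ_[p])‖ = (p : ℝ)⁻¹ := PadicInt.norm_p
  have hplt : ((p : ℝ))⁻¹ < 1 := by
    rw [inv_lt_one₀ (by positivity)]; exact_mod_cast hp2.trans_lt' one_lt_two
  have h2 : ‖(p : ℤ_[p]) * c‖ < 1 := by
    rw [norm_mul, hpn]
    calc (p:ℝ)⁻¹ * ‖c‖ ≤ (p:ℝ)⁻¹ * 1 := by
          apply mul_le_mul_of_nonneg_left hc1 (by positivity)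
      _ < 1 := by simpa using hplt
  have hFnorm : ‖F.eval a‖ < 1 := by
    rw [hFa, sub_eq_add_neg]
    exact lt_of_le_of_lt (PadicInt.nonarchimedean _ _)
      (max_lt h1 (by rwa [norm_neg]))
  have hu : ‖(p : ℤ_[p]) * a ^ (p - 1)‖ < 1 := by
    rw [norm_mul, hpn]
    calc (p:ℝ)⁻¹ * ‖a ^ (p-1)‖ ≤ (p:ℝ)⁻¹ * 1 := by
          apply mul_le_mul_of_nonneg_left (PadicInt.norm_le_one _) (by positivity)
      _ < 1 := by simpa using hplt
  set u : ℤ_[p] := (p : ℤ_[p]) * a ^ (p - 1) with hu_def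
  have hdnorm : ‖F.derivative.eval a‖ = 1 := by
    rw [hderiv]
    have hle : ‖u - 1‖ ≤ 1 := by
      rw [sub_eq_add_neg]
      exact le_trans (PadicInt.nonarchimedean _ _) (by simp [hu.le])
    have hge : (1 : ℝ) ≤ ‖u - 1‖ := by
      have key : (1 : ℝ) ≤ max ‖u‖ ‖u - 1‖ := by
        calc (1:ℝ) = ‖u - (u - 1)‖ := by rw [sub_sub_cancel]; simp
          _ ≤ max ‖u‖ ‖u - 1‖ := by
              rw [sub_eq_add_neg]
              exact le_trans (PadicInt.nonarchimedean _ _) (by rw [norm_neg])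
      exact (le_max_iff.mp key).resolve_left (by push_neg; exact hu)
    linarith
  have hcond : ‖F.eval a‖ < ‖F.derivative.eval a‖ ^ 2 := by
    rw [hdnorm]; simpa using hFnorm
  obtain ⟨z, hz0, hzdist, -, -⟩ := hensels_lemma hcond
  refine ⟨z, ?_, by rwa [Polynomial.coe_aeval_eq_eval, hdnorm] at hzdist⟩
  have : z ^ p - z - (p : ℤ_[p]) * c = 0 := by simpa [hF] using hz0
  linear_combination this




lemma fiber_family (p : ℕ) [hp : Fact p.Prime] (c : ℤ_[p]) :
    ∃ f : Fin p → ℤ_[p], Function.Injective f ∧ ∀ i, (f i) ^ p - f i = p * c := by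
  choose f hf1 hf2 using fiber_root p c
  refine ⟨f, ?_, hf1⟩
  intro i j hij
  by_contra hne
  have hlt : ‖((i : ℕ) : ℤ_[p]) - ((j : ℕ) : ℤ_[p])‖ < 1 := by
    have : ((i : ℕ) : ℤ_[p]) - ((j : ℕ) : ℤ_[p]) = (((i:ℕ):ℤ_[p]) - f i) + (f j - ((j:ℕ):ℤ_[p])) := by
      rw [hij]; ring
    rw [this]
    refine lt_of_le_of_lt (PadicInt.nonarchimedean _ _) (max_lt ?_ (hf2 j))
    rw [← norm_neg]; simpa using hf2 i
  have hdvd : (p : ℤ) ∣ ((i : ℕ) : ℤ) - ((j : ℕ) : ℤ) := by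
    rw [← PadicInt.norm_int_lt_one_iff_dvd]
    push_cast
    exact hlt
  have h0 : ((i : ℕ) : ℤ) - ((j : ℕ) : ℤ) = 0 := by
    refine Int.eq_zero_of_abs_lt_dvd hdvd ?_
    have hi := i.isLt; have hj := j.isLt
    rw [abs_lt]; omega
  exact hne (Fin.ext (by omega))

lemma exists_finset (p : ℕ) [hp : Fact p.Prime] (n : ℕ) :
    ∃ T : Finset ℤ_[p], T.card = p ^ n ∧
      ∀ x ∈ T, (fun y : ℚ_[p] => (1 / (p : ℚ_[p])) * (y ^ p - y))^[n] (x : ℚ_[p]) = 1 := by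
  have hppos : (0:ℝ) < p := by exact_mod_cast hp.out.pos
  have hpQ : ((p : ℚ_[p])) ≠ 0 := by exact_mod_cast hp.out.ne_zero
  induction n with
  | zero => exact ⟨{1}, by simp, by simp⟩
  | succ n ih =>
    obtain ⟨T, hTcard, hT⟩ := ih
    choose f hfinj hfeq using fun c : ℤ_[p] => fiber_family p c
    classical
    refine ⟨T.biUnion (fun c => Finset.image (f c) Finset.univ), ?_, ?_⟩
    · rw [Finset.card_biUnion]
      · simp only [Finset.card_image_of_injective _ (hfinj _), Finset.card_univ,
          Fintype.card_fin, Finset.sum_const, hTcard, smul_eq_mul, pow_succ]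
      · intro c hc d hd hcd
        simp only [Finset.disjoint_left, Finset.mem_image]
        rintro z ⟨i, -, rfl⟩ ⟨j, -, hji⟩
        apply hcd
        have h1 := hfeq c i
        have h2 := hfeq d j
        rw [hji] at h2
        have : (p : ℤ_[p]) * c = p * d := by rw [← h1, ← h2]
        exact mul_left_cancel₀ (by exact_mod_cast hp.out.ne_zero) this
    · intro x hx
      simp only [Finset.mem_biUnion, Finset.mem_image] at hx
      obtain ⟨c, hcT, i, -, rfl⟩ := hx
      rw [Function.iterate_succ_apply]
      have hkey : (1 / (p : ℚ_[p])) * (((f c i : ℤ_[p]) : ℚ_[p]) ^ p - (f c i : ℤ_[p])) = (c : ℚ_[p]) := by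
        have := hfeq c i
        have hcast : ((f c i : ℤ_[p]) : ℚ_[p]) ^ p - ((f c i : ℤ_[p]) : ℚ_[p]) = (p : ℚ_[p]) * (c : ℚ_[p]) := by
          exact_mod_cast congrArg (fun z : ℤ_[p] => (z : ℚ_[p])) this
        rw [hcast]
        field_simp
      rw [hkey]
      exact hT c hcT

/-- For a prime `p` and `n ≥ 1`, the polynomial `φ_p^n(x) − 1` has exactly
`p^n` distinct roots in `ℤ_p`; in particular it splits completely into distinct linear factors
over `ℚ_p`, so every algebraic number `α` with `φ_p^n(α) = 1` is totally `p`-adic (its minimal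
polynomial over `ℚ` splits completely over `ℚ_p`). -/
theorem phi_iter_minus_one_splits_totally_p_adic (p : ℕ) [Fact p.Prime] (n : ℕ) (hn : 1 ≤ n) :
    {x : ℤ_[p] | Polynomial.aeval (x : ℚ_[p]) (phiPolyIter p n) = 1}.ncard = p ^ n ∧
    ((phiPolyIter p n - 1).map (algebraMap ℚ ℚ_[p])).roots.Nodup ∧
    Multiset.card ((phiPolyIter p n - 1).map (algebraMap ℚ ℚ_[p])).roots = p ^ n ∧
    ((phiPolyIter p n - 1).map (algebraMap ℚ ℚ_[p])).Splits ∧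
    (∀ α : ℂ, Polynomial.aeval α (phiPolyIter p n) = 1 →
      ((minpoly ℚ α).map (algebraMap ℚ ℚ_[p])).Splits) := by
  classical
  have hp2 := (Fact.out : p.Prime).two_le
  set S : Set ℤ_[p] := {x : ℤ_[p] | Polynomial.aeval (x : ℚ_[p]) (phiPolyIter p n) = 1} with hS
  set g : Polynomial ℚ_[p] := (phiPolyIter p n - 1).map (algebraMap ℚ ℚ_[p]) with hg
  have hdeg : (phiPolyIter p n - 1).natDegree = p ^ n := by
    rw [show (1 : Polynomial ℚ) = Polynomial.C 1 from Polynomial.C_1.symm, natDegree_sub_C,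
      natDegree_phiPolyIter p n hp2]
  have hne : phiPolyIter p n - 1 ≠ 0 := by
    intro h
    rw [h, natDegree_zero] at hdeg
    exact (pow_pos (by omega : 0 < p) n).ne hdeg
  have hgne : g ≠ 0 := Polynomial.map_ne_zero hne
  have hgdeg : g.natDegree = p ^ n := by rw [hg, natDegree_map, hdeg]
  have hroot_iff : ∀ x : ℚ_[p], x ∈ g.roots ↔ Polynomial.aeval x (phiPolyIter p n) = 1 := by
    intro x
    rw [mem_roots hgne, hg, IsRoot.def, eval_map, ← aeval_def, map_sub, map_one, sub_eq_zero]
  have hinj : Function.Injective (fun x : ℤ_[p] => (x : ℚ_[p])) :=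
    fun a b h => PadicInt.ext h
  have hsub1 : ∀ x : ℤ_[p], x ∈ S → ((x : ℚ_[p]) ∈ g.roots.toFinset) := by
    intro x hx
    rw [Multiset.mem_toFinset, hroot_iff]
    exact hx
  have himg : (fun x : ℤ_[p] => (x : ℚ_[p])) '' S ⊆ ↑g.roots.toFinset := by
    rintro _ ⟨x, hx, rfl⟩; exact hsub1 x hx
  have hSfin : S.Finite := by
    refine Set.Finite.subset (Set.Finite.preimage hinj.injOn g.roots.toFinset.finite_toSet)
      (fun x hx => hsub1 x hx)
  have hS_img : ((fun x : ℤ_[p] => (x : ℚ_[p])) '' S).ncard = S.ncard :=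
    Set.ncard_image_of_injective S hinj
  obtain ⟨T, hTcard, hT⟩ := exists_finset p n
  have hTsub : ↑T ⊆ S := by
    intro x hx
    show Polynomial.aeval (x : ℚ_[p]) (phiPolyIter p n) = 1
    rw [aeval_phiPolyIter]
    exact hT x hx
  have hlow : p ^ n ≤ S.ncard := by
    rw [← hTcard, ← Set.ncard_coe_finset]
    exact Set.ncard_le_ncard hTsub hSfin
  have hA : S.ncard ≤ g.roots.toFinset.card := by
    rw [← hS_img, ← Set.ncard_coe_finset]
    exact Set.ncard_le_ncard himg g.roots.toFinset.finite_toSet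
  have hB : g.roots.toFinset.card ≤ Multiset.card g.roots := Multiset.toFinset_card_le _
  have hC : Multiset.card g.roots ≤ p ^ n := hgdeg ▸ g.card_roots'
  have hcard : Multiset.card g.roots = p ^ n := le_antisymm hC ((hlow.trans hA).trans hB)
  have hScard : S.ncard = p ^ n := le_antisymm ((hA.trans hB).trans hC) hlow
  have hnodup : g.roots.Nodup :=
    Multiset.toFinset_card_eq_card_iff_nodup.mp
      (le_antisymm hB (hcard ▸ hlow.trans hA))
  have hsplits : ((phiPolyIter p n - 1).map (algebraMap ℚ ℚ_[p])).Splits := by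
    show g.Splits
    exact splits_iff_card_roots.mpr (by rw [hcard, hgdeg])
  refine ⟨hScard, hnodup, hcard, hsplits, ?_⟩
  intro α hα
  have hroot : Polynomial.aeval α (phiPolyIter p n - 1) = 0 := by
    rw [map_sub, hα, map_one, sub_self]
  exact Splits.of_dvd hsplits hgne (Polynomial.map_dvd _ (minpoly.dvd ℚ α hroot))
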